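/- arXiv:math/0209020 — 2 statements merged into one kernel-verified Lean document; each statement's English description precedes it below -/
import Mathlib

section
/- Every coordinate of every positive root lies in the subsemiring of ℝ generated by the constants sin(π n / m) / sin(π / m), where m ranges over the nonzero entries M s t (s, t ∈ B, M s t ≠ 0) and n ranges over the integers with 1 ≤ n ≤ m/2. (Equivalently, every such coordinate is a polynomial with natural-number coefficients in these constants.) -/
open Real

variable {B : Type*}

/-- The pairing constant `⟨α_s, α_t⟩` of the standard bilinear form:
`-cos (π / M s t)` if `M s t ≠ 0`, and `-1` if `M s t = 0` (i.e. `m_{s,t} = ∞`). -/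
noncomputable def pairing (M : CoxeterMatrix B) (s t : B) : ℝ :=
  if M s t = 0 then -1 else -Real.cos (Real.pi / (M s t : ℝ))

/-- The standard symmetric bilinear form on `V = B → ℝ`. -/
noncomputable def form [Fintype B] (M : CoxeterMatrix B) (v w : B → ℝ) : ℝ :=
  ∑ s, ∑ t, v s * w t * pairing M s t

/-- The simple root `α_s`, i.e. the standard basis vector at `s`. -/
noncomputable def sroot [DecidableEq B] (s : B) : B → ℝ := Pi.single s 1

/-- `λ` is a root: `λ = ρ(w) α_s` for some `w ∈ W`, `s ∈ B`. -/
def IsRoot [DecidableEq B] (M : CoxeterMatrix B)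
    (ρ : M.Group →* Module.End ℝ (B → ℝ)) (lam : B → ℝ) : Prop :=
  ∃ (w : M.Group) (s : B), ρ w (sroot s) = lam

/-- `λ` is positive: all coordinates are nonnegative. -/
def IsPos (lam : B → ℝ) : Prop := ∀ s, 0 ≤ lam s

/-- `λ` is negative: all coordinates are nonpositive. -/
def IsNeg (lam : B → ℝ) : Prop := ∀ s, lam s ≤ 0

/-- `λ` is a positive root. -/
def IsPosRoot [DecidableEq B] (M : CoxeterMatrix B)
    (ρ : M.Group →* Module.End ℝ (B → ℝ)) (lam : B → ℝ) : Prop :=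
  IsRoot M ρ lam ∧ IsPos lam

/-- `λ` dominates `μ`: for every `w ∈ W`, if `ρ(w) μ` is positive then so is `ρ(w) λ`. -/
def Dominates (M : CoxeterMatrix B)
    (ρ : M.Group →* Module.End ℝ (B → ℝ)) (lam mu : B → ℝ) : Prop :=
  ∀ w : M.Group, IsPos (ρ w mu) → IsPos (ρ w lam)

/-- `λ` is a minimal root: a positive root dominating no positive root other than itself. -/
def IsMinimal [DecidableEq B] (M : CoxeterMatrix B)
    (ρ : M.Group →* Module.End ℝ (B → ℝ)) (lam : B → ℝ) : Prop :=
  IsPosRoot M ρ lam ∧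
    ∀ mu, IsPosRoot M ρ mu → Dominates M ρ lam mu → mu = lam

/-- The depth `δ(λ)` of a positive root:
the least Coxeter length of a `w ∈ W` with `ρ(w⁻¹) λ` negative. -/
noncomputable def depth (M : CoxeterMatrix B)
    (ρ : M.Group →* Module.End ℝ (B → ℝ)) (lam : B → ℝ) : ℕ :=
  sInf {n | ∃ w : M.Group, IsNeg (ρ w⁻¹ lam) ∧ M.toCoxeterSystem.length w = n}

/-- The partial order `λ ⪯ μ` on positive roots:
`μ = ρ(w) λ` for some `w` with `δ(μ) = ℓ(w) + δ(λ)`. -/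
def PLE (M : CoxeterMatrix B)
    (ρ : M.Group →* Module.End ℝ (B → ℝ)) (lam mu : B → ℝ) : Prop :=
  ∃ w : M.Group, mu = ρ w lam ∧
    depth M ρ mu = M.toCoxeterSystem.length w + depth M ρ lam

/-- The Coxeter graph of `M`: distinct `s`, `t` are adjacent iff `M s t ≥ 3` or `M s t = 0`. -/
def coxGraph (M : CoxeterMatrix B) : SimpleGraph B where
  Adj s t := s ≠ t ∧ (M s t = 0 ∨ 3 ≤ M s t)
  symm := by
    constructor
    intro s t h
    exact ⟨h.1.symm, by rw [M.symmetric t s]; exact h.2⟩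
  loopless := by constructor; intro s h; exact h.1 rfl

/-- The support of a vector `λ ∈ V`. -/
def supp (lam : B → ℝ) : Set B := {s | lam s ≠ 0}




/-- The generator set. -/
def genSet (M : CoxeterMatrix B) : Set ℝ := {x : ℝ | ∃ u v : B, M u v ≠ 0 ∧ ∃ n : ℕ,
      1 ≤ n ∧ 2 * n ≤ M u v ∧
      x = Real.sin (Real.pi * n / (M u v : ℝ)) / Real.sin (Real.pi / (M u v : ℝ))}

lemma genSet_nonneg (M : CoxeterMatrix B) {x : ℝ} (hx : x ∈ genSet M) : 0 ≤ x := by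
  obtain ⟨u, v, hm, n, hn1, hn2, rfl⟩ := hx
  have hm2 : 2 ≤ M u v := le_trans (by omega) hn2
  have hmpos : (0:ℝ) < (M u v : ℝ) := by positivity
  apply div_nonneg
  · apply Real.sin_nonneg_of_nonneg_of_le_pi
    · positivity
    · rw [div_le_iff₀ hmpos]
      have hnm : (n:ℝ) ≤ (M u v : ℝ) := by exact_mod_cast (by omega : n ≤ M u v)
      nlinarith [Real.pi_pos]
  · apply Real.sin_nonneg_of_nonneg_of_le_pi
    · positivity
    · rw [div_le_iff₀ hmpos]
      have h1m : (1:ℝ) ≤ (M u v : ℝ) := by exact_mod_cast (by omega : 1 ≤ M u v)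
      nlinarith [Real.pi_pos]

lemma mem_nonneg (M : CoxeterMatrix B) {x : ℝ} (hx : x ∈ Subsemiring.closure (genSet M)) :
    0 ≤ x := by
  induction hx using Subsemiring.closure_induction with
  | mem x hx => exact genSet_nonneg M hx
  | zero => norm_num
  | one => norm_num
  | add x y hx hy ihx ihy => positivity
  | mul x y hx hy ihx ihy => positivity

/-- membership of sine ratios for all 0 ≤ k ≤ m -/
lemma ratio_mem (M : CoxeterMatrix B) {u v : B} (hm : M u v ≠ 0) {k : ℕ} (hk : k ≤ M u v) :
    Real.sin (Real.pi * k / (M u v : ℝ)) / Real.sin (Real.pi / (M u v : ℝ)) ∈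
      Subsemiring.closure (genSet M) := by
  set m := M u v with hmdef
  rcases Nat.eq_zero_or_pos k with rfl | hk1
  · simpa using zero_mem _
  rcases eq_or_lt_of_le hk with rfl | hklt
  · have hmne : (m:ℝ) ≠ 0 := by positivity
    have : Real.pi * (m:ℝ) / (m:ℝ) = Real.pi := by field_simp
    rw [this, Real.sin_pi, zero_div]
    exact zero_mem _
  -- 1 ≤ k ≤ m - 1
  rcases le_or_gt (2*k) m with h2k | h2k
  · exact Subsemiring.subset_closure ⟨u, v, hm, k, hk1, h2k, rfl⟩
  · -- use n = m - k
    have hn1 : 1 ≤ m - k := by omega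
    have hn2 : 2 * (m - k) ≤ m := by omega
    have key : Real.sin (Real.pi * k / (m:ℝ)) = Real.sin (Real.pi * (↑(m - k)) / (m:ℝ)) := by
      have hmne : (m:ℝ) ≠ 0 := by positivity
      have : (↑(m-k) : ℝ) = (m:ℝ) - (k:ℝ) := by
        push_cast [Nat.cast_sub (le_of_lt hklt)]; ring
      rw [this]
      rw [show Real.pi * ((m:ℝ) - k) / m = Real.pi - Real.pi * k / m by field_simp]
      rw [Real.sin_pi_sub]
    rw [key]
    exact Subsemiring.subset_closure ⟨u, v, hm, m - k, hn1, hn2, rfl⟩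

noncomputable def cc (K : ℝ) : ℕ → ℝ
  | 0 => 0
  | 1 => 1
  | (k+2) => K * cc K (k+1) - cc K k

lemma cc_two (k : ℕ) : cc 2 k = k := by
  induction k using Nat.strong_induction_on with
  | _ k ih =>
    match k with
    | 0 => simp [cc]
    | 1 => simp [cc]
    | (k+2) =>
      rw [cc, ih (k+1) (by omega), ih k (by omega)]
      push_cast; ring

lemma sin_rec (θ x : ℝ) : Real.sin (x + θ) = 2 * Real.cos θ * Real.sin x - Real.sin (x - θ) := by
  rw [Real.sin_add, Real.sin_sub]; ring

lemma cc_cos {m : ℕ} (hm : 2 ≤ m) (k : ℕ) :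
    cc (2 * Real.cos (Real.pi / m)) k
      = Real.sin (Real.pi * k / m) / Real.sin (Real.pi / m) := by
  have hmpos : (0:ℝ) < (m:ℝ) := by positivity
  have hθpos : 0 < Real.pi / m := by positivity
  have hθlt : Real.pi / m < Real.pi := by
    rw [div_lt_iff₀ hmpos]
    have h2m : (2:ℝ) ≤ (m:ℝ) := by exact_mod_cast hm
    nlinarith [Real.pi_pos, mul_le_mul_of_nonneg_left h2m (le_of_lt Real.pi_pos)]
  have hsin : Real.sin (Real.pi / m) ≠ 0 :=
    ne_of_gt (Real.sin_pos_of_pos_of_lt_pi hθpos hθlt)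
  induction k using Nat.strong_induction_on with
  | _ k ih =>
    match k with
    | 0 => simp [cc]
    | 1 =>
      rw [show Real.pi * (1:ℕ) / m = Real.pi / m by push_cast; ring]
      rw [div_self hsin]; simp [cc]
    | (k+2) =>
      rw [cc, ih (k+1) (by omega), ih k (by omega)]
      have e1 : Real.pi * (↑(k+2)) / m = Real.pi * (↑(k+1)) / m + Real.pi / m := by
        push_cast; ring
      have e2 : Real.pi * (k:ℕ) / m = Real.pi * (↑(k+1)) / m - Real.pi / m := by
        push_cast; ring
      rw [e1, sin_rec, ← e2]
      field_simp

lemma cc_mem (M : CoxeterMatrix B) {s t : B} (hst : s ≠ t) {k : ℕ}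
    (hk : M s t ≠ 0 → k ≤ M s t) :
    cc (-2 * pairing M s t) k ∈ Subsemiring.closure (genSet M) := by
  by_cases hm : M s t = 0
  · rw [pairing, if_pos hm, show (-2 * (-1:ℝ)) = 2 by norm_num, cc_two]
    exact natCast_mem _ k
  · have hm2 : 2 ≤ M s t := by
      have := M.off_diagonal s t hst
      omega
    rw [pairing, if_neg hm, show (-2 * (-Real.cos (Real.pi / (M s t : ℝ))))
        = 2 * Real.cos (Real.pi / (M s t : ℝ)) by ring, cc_cos hm2]
    exact ratio_mem M hm (hk hm)

lemma pairing_symm (M : CoxeterMatrix B) (u v : B) : pairing M u v = pairing M v u := by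
  unfold pairing; rw [M.symmetric u v]

lemma pairing_diag (M : CoxeterMatrix B) (u : B) : pairing M u u = 1 := by
  unfold pairing
  rw [M.diagonal u]
  norm_num

section rep
variable [DecidableEq B] [Fintype B] (M : CoxeterMatrix B)
  (ρ : M.Group →* Module.End ℝ (B → ℝ))
  (hρ : ∀ (s : B) (v : B → ℝ),
      ρ (M.simple s) v = v - (2 * form M v (sroot s)) • sroot s)

lemma form_sroot (v : B → ℝ) (x : B) :
    form M v (sroot x) = ∑ u, v u * pairing M u x := by
  unfold form sroot
  apply Finset.sum_congr rfl
  intro u _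
  rw [Finset.sum_eq_single x]
  · simp
  · intro t _ ht
    simp [Pi.single_eq_of_ne ht]
  · intro hx
    exact absurd (Finset.mem_univ x) hx

lemma form_sroot_sroot (u x : B) : form M (sroot u) (sroot x) = pairing M u x := by
  rw [form_sroot]
  rw [Finset.sum_eq_single u]
  · simp [sroot]
  · intro t _ ht
    simp [sroot, Pi.single_eq_of_ne ht]
  · intro hx
    exact absurd (Finset.mem_univ u) hx

include hρ in
lemma rho_simple_sroot (i j : B) :
    ρ (M.simple i) (sroot j) = sroot j - (2 * pairing M j i) • sroot i := by
  rw [hρ, form_sroot_sroot]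

include hρ in
lemma dihedral {s t : B} (hst : s ≠ t) (k : ℕ) :
    ρ (M.toCoxeterSystem.wordProd (CoxeterSystem.alternatingWord s t k)) (sroot s)
      = (if Even k then cc (-2 * pairing M s t) (k+1) else cc (-2 * pairing M s t) k) • sroot s
        + (if Even k then cc (-2 * pairing M s t) k else cc (-2 * pairing M s t) (k+1))
          • sroot t := by
  set K := -2 * pairing M s t with hK
  induction k with
  | zero =>
    simp [CoxeterSystem.wordProd, CoxeterSystem.alternatingWord, cc]
  | succ k ih =>
    rw [CoxeterSystem.alternatingWord_succ', CoxeterSystem.wordProd_cons, map_mul,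
      Module.End.mul_apply, CoxeterMatrix.toCoxeterSystem_simple, ih]
    have hcc2 : ∀ j : ℕ, cc K (j+1+1) = K * cc K (j+1) - cc K j := fun j => rfl
    rcases Nat.even_or_odd k with he | ho
    · have ho1 : ¬ Even (k+1) := by simp [Nat.even_add_one, he]
      rw [if_pos he, if_pos he, if_pos he, if_neg ho1, if_neg ho1,
        map_add, map_smul, map_smul,
        rho_simple_sroot M ρ hρ t s, rho_simple_sroot M ρ hρ t t,
        pairing_diag, hcc2]
      funext x
      simp only [Pi.add_apply, Pi.sub_apply, Pi.smul_apply, smul_eq_mul, hK]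
      ring
    · have he1 : Even (k+1) := Nat.even_add_one.mpr (Nat.not_even_iff_odd.mpr ho)
      have ho0 : ¬ Even k := Nat.not_even_iff_odd.mpr ho
      rw [if_neg ho0, if_neg ho0, if_neg ho0, if_pos he1, if_pos he1,
        map_add, map_smul, map_smul,
        rho_simple_sroot M ρ hρ s s, rho_simple_sroot M ρ hρ s t,
        pairing_diag, pairing_symm M t s, hcc2]
      funext x
      simp only [Pi.add_apply, Pi.sub_apply, Pi.smul_apply, smul_eq_mul, hK]
      ring
end rep

section main
variable [DecidableEq B] [Fintype B]

open CoxeterSystem in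
lemma main_lemma (M : CoxeterMatrix B) (ρ : M.Group →* Module.End ℝ (B → ℝ))
    (hρ : ∀ (s : B) (v : B → ℝ),
      ρ (M.simple s) v = v - (2 * form M v (sroot s)) • sroot s) :
    ∀ (n : ℕ) (w : M.Group) (s : B), M.toCoxeterSystem.length w = n →
    M.toCoxeterSystem.length (w * M.simple s) = n + 1 →
    ∀ x, ρ w (sroot s) x ∈ Subsemiring.closure (genSet M) := by
  classical
  intro n
  induction n using Nat.strong_induction_on with
  | _ n ih =>
  intro w s hlen hls0 x
  set cs := M.toCoxeterSystem with hcs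
  have hls : cs.length (w * cs.simple s) = n + 1 := hls0
  rcases Nat.eq_zero_or_pos n with rfl | hn
  · -- w = 1
    have hw : w = 1 := cs.length_eq_zero_iff.mp hlen
    subst hw
    rw [map_one, Module.End.one_apply]
    by_cases hxs : x = s
    · subst hxs
      simpa [sroot] using one_mem _
    · simpa [sroot, Pi.single_eq_of_ne hxs] using zero_mem _
  -- pick a right descent t of w
  obtain ⟨ω, hωl, hωp⟩ := cs.exists_reduced_word w
  have hωne : ω ≠ [] := by
    intro h
    rw [h] at hωl
    rw [h, cs.wordProd_nil] at hωp; rw [hωp, cs.length_one] at hlen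
    omega
  set t := ω.getLast hωne with ht
  have hsplit : ω.dropLast ++ [t] = ω := List.dropLast_append_getLast hωne
  have hwprod : w = cs.wordProd ω.dropLast * cs.simple t := by
    conv_lhs => rw [hωp, ← hsplit]
    rw [cs.wordProd_append, cs.wordProd_singleton]
  have hwt : w * cs.simple t = cs.wordProd ω.dropLast := by
    rw [hwprod, cs.simple_mul_simple_cancel_right]
  have hlwt : cs.length (w * cs.simple t) + 1 = n := by
    have h1 : cs.length (w * cs.simple t) ≤ n - 1 := by
      rw [hwt]
      calc cs.length (cs.wordProd ω.dropLast) ≤ ω.dropLast.length :=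
            cs.length_wordProd_le _
        _ ≤ n - 1 := by
            rw [List.length_dropLast, ← (hωl : cs.length (cs.wordProd ω) = ω.length), ← hωp, hlen]
    rcases cs.length_mul_simple w t with h | h
    · rw [hlen] at h
      omega
    · rw [hlen] at h
      exact h
  have hst : s ≠ t := by
    intro h
    rw [← h] at hlwt
    omega
  set m := M s t with hm
  have hm1 : m ≠ 1 := M.off_diagonal s t hst
  set N := if m = 0 then n else m - 1 with hN
  set P : ℕ → Prop := fun k => ∃ u : M.Group,
    w = u * cs.wordProd (CoxeterSystem.alternatingWord s t k) ∧
      cs.length w = cs.length u + k with hP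
  have hP1 : P 1 := by
    refine ⟨w * cs.simple t, ?_, ?_⟩
    · rw [show CoxeterSystem.alternatingWord s t 1 = [t] from rfl, cs.wordProd_singleton,
        cs.simple_mul_simple_cancel_right]
    · rw [hlen, hlwt]
  have h1N : 1 ≤ N := by
    rcases eq_or_ne m 0 with h | h
    · rw [hN, if_pos h]; omega
    · rw [hN, if_neg h]; omega
  set k := Nat.findGreatest P N with hkdef
  have hPk : P k := Nat.findGreatest_spec h1N hP1
  have hk1 : 1 ≤ k := Nat.le_findGreatest h1N hP1
  have hkN : k ≤ N := Nat.findGreatest_le N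
  have hkm : m ≠ 0 → k + 1 ≤ m := by
    intro h
    rw [hN, if_neg h] at hkN
    omega
  obtain ⟨u, hwu, hlu⟩ := hPk
  -- the two descent claims
  have key : ∀ r : B, r = s ∨ r = t →
      cs.length (u * cs.simple r) = cs.length u + 1 := by
    intro r hr
    rcases cs.length_mul_simple u r with h | h
    · exact h
    · exfalso
      -- case 1: r is the head of the alternating word: cancellation
      have cancel : CoxeterSystem.alternatingWord s t k
          = r :: CoxeterSystem.alternatingWord s t (k-1) → False := by
        intro hlist
        have hw2 : w = (u * cs.simple r) *
            cs.wordProd (CoxeterSystem.alternatingWord s t (k-1)) := by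
          rw [hwu, hlist, cs.wordProd_cons, ← mul_assoc]
        have hle : cs.length w ≤ (cs.length u - 1) + (k-1) := by
          rw [hw2]
          calc cs.length _ ≤ cs.length (u * cs.simple r) +
                cs.length (cs.wordProd (CoxeterSystem.alternatingWord s t (k-1))) :=
              cs.length_mul_le _ _
            _ ≤ (cs.length u - 1) + (k - 1) := by
                have := cs.length_wordProd_le (CoxeterSystem.alternatingWord s t (k-1))
                rw [CoxeterSystem.length_alternatingWord] at this
                omega
        omega
      -- case 2: r extends the alternating word
      have extend : cs.simple r * cs.wordProd (CoxeterSystem.alternatingWord s t k)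
          = cs.wordProd (CoxeterSystem.alternatingWord s t (k+1)) → False := by
        intro hlist
        have hw3 : w = (u * cs.simple r) *
            cs.wordProd (CoxeterSystem.alternatingWord s t (k+1)) := by
          rw [hwu, ← hlist, ← mul_assoc, cs.simple_mul_simple_cancel_right]
        rcases eq_or_ne m 0 with hm0 | hm0
        · -- infinite case : k = N = n forces u = 1
          rcases Nat.lt_or_ge k N with hlt | hge
          · refine Nat.findGreatest_is_greatest (lt_add_one k) (by omega) ⟨u * cs.simple r, hw3, ?_⟩
            have hle : cs.length w ≤ cs.length (u * cs.simple r) + (k+1) := by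
              rw [hw3]
              calc cs.length _ ≤ cs.length (u * cs.simple r) +
                    cs.length (cs.wordProd (CoxeterSystem.alternatingWord s t (k+1))) :=
                  cs.length_mul_le _ _
                _ ≤ cs.length (u * cs.simple r) + (k+1) := by
                    have := cs.length_wordProd_le (CoxeterSystem.alternatingWord s t (k+1))
                    rw [CoxeterSystem.length_alternatingWord] at this
                    omega
            omega
          · -- k = N = n, so ℓ u = 0, contradicting h
            rw [hN, if_pos hm0] at hkN hge
            omega
        · rcases Nat.lt_or_ge (k+1) m with hlt | hge
          · refine Nat.findGreatest_is_greatest (lt_add_one k) (by rw [hN, if_neg hm0]; omega)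
              ⟨u * cs.simple r, hw3, ?_⟩
            have hle : cs.length w ≤ cs.length (u * cs.simple r) + (k+1) := by
              rw [hw3]
              calc cs.length _ ≤ cs.length (u * cs.simple r) +
                    cs.length (cs.wordProd (CoxeterSystem.alternatingWord s t (k+1))) :=
                  cs.length_mul_le _ _
                _ ≤ cs.length (u * cs.simple r) + (k+1) := by
                    have := cs.length_wordProd_le (CoxeterSystem.alternatingWord s t (k+1))
                    rw [CoxeterSystem.length_alternatingWord] at this
                    omega
            omega
          · -- k + 1 = m : braid trick
            have hkm1 : k + 1 = m := le_antisymm (hkm hm0) hge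
            have hbraid : cs.wordProd (CoxeterSystem.alternatingWord s t m)
                = cs.wordProd (CoxeterSystem.alternatingWord s t (m-1)) * cs.simple s := by
              have h1 : cs.wordProd (CoxeterSystem.braidWord M s t)
                  = cs.wordProd (CoxeterSystem.braidWord M t s) := cs.wordProd_braidWord_eq s t
              unfold CoxeterSystem.braidWord at h1
              rw [M.symmetric t s] at h1
              rw [← hm] at h1
              have h2 : CoxeterSystem.alternatingWord t s m
                  = (CoxeterSystem.alternatingWord s t (m-1)).concat s := by
                conv_lhs => rw [show m = (m-1)+1 by omega]
                rw [CoxeterSystem.alternatingWord_succ]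
              rw [h1, h2, cs.wordProd_concat]
            have hw4 : w * cs.simple s = (u * cs.simple r) *
                cs.wordProd (CoxeterSystem.alternatingWord s t (m-1)) := by
              rw [hw3, hkm1, hbraid, ← mul_assoc, cs.simple_mul_simple_cancel_right]
            have hle : cs.length (w * cs.simple s) ≤ cs.length (u * cs.simple r) + (m-1) := by
              rw [hw4]
              calc cs.length _ ≤ cs.length (u * cs.simple r) +
                    cs.length (cs.wordProd (CoxeterSystem.alternatingWord s t (m-1))) :=
                  cs.length_mul_le _ _
                _ ≤ cs.length (u * cs.simple r) + (m-1) := by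
                    have := cs.length_wordProd_le (CoxeterSystem.alternatingWord s t (m-1))
                    rw [CoxeterSystem.length_alternatingWord] at this
                    omega
            omega
      -- now dispatch on parity and which letter r is
      rcases Nat.even_or_odd k with he | ho
      · have hhead : CoxeterSystem.alternatingWord s t k
            = s :: CoxeterSystem.alternatingWord s t (k-1) := by
          conv_lhs => rw [show k = (k-1)+1 by omega]
          rw [CoxeterSystem.alternatingWord_succ']
          have : ¬ Even (k-1) := by
            rcases he with ⟨j, hj⟩
            rintro ⟨i, hi⟩
            omega
          rw [if_neg this]
        have hext : cs.simple t * cs.wordProd (CoxeterSystem.alternatingWord s t k)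
            = cs.wordProd (CoxeterSystem.alternatingWord s t (k+1)) := by
          rw [CoxeterSystem.alternatingWord_succ', if_pos he, cs.wordProd_cons]
        rcases hr with rfl | rfl
        · exact cancel hhead
        · exact extend hext
      · have hhead : CoxeterSystem.alternatingWord s t k
            = t :: CoxeterSystem.alternatingWord s t (k-1) := by
          conv_lhs => rw [show k = (k-1)+1 by omega]
          rw [CoxeterSystem.alternatingWord_succ']
          have : Even (k-1) := by
            rcases ho with ⟨j, hj⟩
            exact ⟨j, by omega⟩
          rw [if_pos this]
        have hext : cs.simple s * cs.wordProd (CoxeterSystem.alternatingWord s t k)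
            = cs.wordProd (CoxeterSystem.alternatingWord s t (k+1)) := by
          rw [CoxeterSystem.alternatingWord_succ',
            if_neg (Nat.not_even_iff_odd.mpr ho), cs.wordProd_cons]
        rcases hr with rfl | rfl
        · exact extend hext
        · exact cancel hhead
  have hus : cs.length (u * cs.simple s) = cs.length u + 1 := key s (Or.inl rfl)
  have hut : cs.length (u * cs.simple t) = cs.length u + 1 := key t (Or.inr rfl)
  have hlun : cs.length u < n := by
    rw [hlen] at hlu
    omega
  have ihs : ∀ y, ρ u (sroot s) y ∈ Subsemiring.closure (genSet M) :=
    ih (cs.length u) hlun u s rfl hus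
  have iht : ∀ y, ρ u (sroot t) y ∈ Subsemiring.closure (genSet M) :=
    ih (cs.length u) hlun u t rfl hut
  have hccm : ∀ j : ℕ, (M s t ≠ 0 → j ≤ M s t) →
      cc (-2 * pairing M s t) j ∈ Subsemiring.closure (genSet M) :=
    fun j hj => cc_mem M hst hj
  have hrepr : ρ w (sroot s)
      = (if Even k then cc (-2 * pairing M s t) (k+1) else cc (-2 * pairing M s t) k)
          • (ρ u (sroot s))
        + (if Even k then cc (-2 * pairing M s t) k else cc (-2 * pairing M s t) (k+1))
          • (ρ u (sroot t)) := by
    rw [hwu, map_mul, Module.End.mul_apply, dihedral M ρ hρ hst k, map_add, map_smul, map_smul]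
  rw [hrepr]
  simp only [Pi.add_apply, Pi.smul_apply, smul_eq_mul]
  apply add_mem
  · refine mul_mem ?_ (ihs x)
    rcases Nat.even_or_odd k with he | ho
    · rw [if_pos he]
      exact hccm (k+1) (fun h0 => hkm h0)
    · rw [if_neg (Nat.not_even_iff_odd.mpr ho)]
      exact hccm k (fun h0 => by have := hkm h0; omega)
  · refine mul_mem ?_ (iht x)
    rcases Nat.even_or_odd k with he | ho
    · rw [if_pos he]
      exact hccm k (fun h0 => by have := hkm h0; omega)
    · rw [if_neg (Nat.not_even_iff_odd.mpr ho)]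
      exact hccm (k+1) (fun h0 => hkm h0)

end main

-- MORE3
theorem statement10 [DecidableEq B] [Fintype B] (M : CoxeterMatrix B)
    (ρ : M.Group →* Module.End ℝ (B → ℝ))
    (hρ : ∀ (s : B) (v : B → ℝ),
      ρ (M.simple s) v = v - (2 * form M v (sroot s)) • sroot s)
    (lam : B → ℝ) (hlam : IsPosRoot M ρ lam) (s : B) :
    lam s ∈ Subsemiring.closure {x : ℝ | ∃ u v : B, M u v ≠ 0 ∧ ∃ n : ℕ,
      1 ≤ n ∧ 2 * n ≤ M u v ∧
      x = Real.sin (Real.pi * n / (M u v : ℝ)) / Real.sin (Real.pi / (M u v : ℝ))} := by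
  classical
  obtain ⟨⟨w, s', hws'⟩, hpos⟩ := hlam
  show lam s ∈ Subsemiring.closure (genSet M)
  set cs := M.toCoxeterSystem with hcs
  rcases cs.length_mul_simple w s' with h | h
  · rw [← hws']
    exact main_lemma M ρ hρ (cs.length w) w s' rfl h s
  · set w' := w * M.simple s' with hw'
    have hcancel : w' * cs.simple s' = w := by
      rw [hw']
      exact cs.simple_mul_simple_cancel_right s'
    have hl' : cs.length (w' * M.simple s') = cs.length w' + 1 := by
      rw [show w' * M.simple s' = w from hcancel]
      have : cs.length w' = cs.length (w * cs.simple s') := rfl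
      omega
    have hmem : ∀ y, ρ w' (sroot s') y ∈ Subsemiring.closure (genSet M) :=
      fun y => main_lemma M ρ hρ (cs.length w') w' s' rfl hl' y
    have hrefl : ρ (M.simple s') (sroot s') = -sroot s' := by
      rw [rho_simple_sroot M ρ hρ s' s', pairing_diag]
      funext y
      simp only [Pi.sub_apply, Pi.smul_apply, Pi.neg_apply, smul_eq_mul]
      ring
    have hval : ρ w' (sroot s') = -lam := by
      rw [hw', map_mul, Module.End.mul_apply, hrefl, map_neg, hws']
    have h1 : -(lam s) ∈ Subsemiring.closure (genSet M) := by
      have := hmem s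
      rw [hval] at this
      simpa using this
    have h2 : lam s = 0 := le_antisymm (by linarith [mem_nonneg M h1]) (hpos s)
    rw [h2]
    exact zero_mem _
end

section
/- Let λ be a minimal root and t ∈ supp(λ) with λ_t = 1. If at least four elements of supp(λ) \ {t} are adjacent to t in the Coxeter graph, then ρ(t) λ is a positive root that is not minimal. -/
open Real

variable {B : Type*}

section S19Aux

open CoxeterSystem Finset

set_option linter.unusedSectionVars false
set_option linter.unusedVariables false

variable {B : Type*} [DecidableEq B] [Fintype B]

namespace S19

variable (M : CoxeterMatrix B)

/-! ### pairing basics -/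

lemma pairing_self (s : B) : pairing M s s = 1 := by
  simp [pairing, M.diagonal s, Real.cos_pi]

lemma pairing_comm (s t : B) : pairing M s t = pairing M t s := by
  rw [pairing, pairing, M.symmetric s t]

lemma neg_one_le_pairing (s t : B) : -1 ≤ pairing M s t := by
  rw [pairing]
  split
  · exact le_refl _
  · simp only [neg_le_neg_iff]
    exact Real.cos_le_one _

lemma pairing_nonpos {s t : B} (h : s ≠ t) : pairing M s t ≤ 0 := by
  rw [pairing]
  split
  · norm_num
  · rename_i hM
    have h2 : 2 ≤ M s t := by
      rcases Nat.lt_or_ge (M s t) 2 with h' | h'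
      · interval_cases hh : (M s t) <;> simp_all [M.off_diagonal s t h]
      · exact h'
    have : Real.pi / (M s t : ℝ) ≤ Real.pi / 2 := by
      apply div_le_div_of_nonneg_left Real.pi_pos.le (by norm_num)
      exact_mod_cast h2
    have hMpos : (0:ℝ) < (M s t : ℝ) := by
      have : 0 < M s t := by omega
      exact_mod_cast this
    have : 0 ≤ Real.cos (Real.pi / (M s t : ℝ)) := by
      apply Real.cos_nonneg_of_mem_Icc
      constructor
      · have : (0:ℝ) ≤ Real.pi / (M s t : ℝ) := by positivity
        linarith
      · exact this
    linarith

lemma pairing_le_neg_half {s t : B} (h : s ≠ t) (hM : M s t = 0 ∨ 3 ≤ M s t) :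
    pairing M s t ≤ -(1/2) := by
  rw [pairing]
  rcases hM with hM | hM
  · simp [hM]; norm_num
  · have hne : M s t ≠ 0 := by omega
    rw [if_neg hne]
    have h3 : (3:ℝ) ≤ (M s t : ℝ) := by exact_mod_cast hM
    have : Real.pi / (M s t : ℝ) ≤ Real.pi / 3 := by
      apply div_le_div_of_nonneg_left Real.pi_pos.le (by norm_num) h3
    have hcos : Real.cos (Real.pi / 3) ≤ Real.cos (Real.pi / (M s t : ℝ)) := by
      apply Real.cos_le_cos_of_nonneg_of_le_pi (by positivity)
      · linarith [Real.pi_pos]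
      · exact this
    rw [Real.cos_pi_div_three] at hcos
    linarith

/-! ### form basics -/

lemma form_def (v w : B → ℝ) : form M v w = ∑ s, ∑ u, v s * w u * pairing M s u := rfl

lemma form_comm (v w : B → ℝ) : form M v w = form M w v := by
  rw [form_def, form_def, Finset.sum_comm]
  apply Finset.sum_congr rfl; intro u _
  apply Finset.sum_congr rfl; intro s _
  rw [pairing_comm]; ring

lemma form_add_left (v v' w : B → ℝ) : form M (v + v') w = form M v w + form M v' w := by
  simp only [form_def, Pi.add_apply, add_mul, Finset.sum_add_distrib]

lemma form_smul_left (a : ℝ) (v w : B → ℝ) : form M (a • v) w = a * form M v w := by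
  simp only [form_def, Pi.smul_apply, smul_eq_mul, Finset.mul_sum, mul_assoc]

lemma form_sub_left (v v' w : B → ℝ) : form M (v - v') w = form M v w - form M v' w := by
  have := form_add_left M (v - v') v' w
  simp only [sub_add_cancel] at this
  linarith

lemma form_add_right (v w w' : B → ℝ) : form M v (w + w') = form M v w + form M v w' := by
  rw [form_comm, form_add_left, form_comm M w v, form_comm M w' v]

lemma form_smul_right (a : ℝ) (v w : B → ℝ) : form M v (a • w) = a * form M v w := by
  rw [form_comm, form_smul_left, form_comm M w v]

lemma form_sub_right (v w w' : B → ℝ) : form M v (w - w') = form M v w - form M v w' := by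
  rw [form_comm, form_sub_left, form_comm M w v, form_comm M w' v]

lemma form_zero_left (w : B → ℝ) : form M 0 w = 0 := by
  simp only [form_def, Pi.zero_apply, zero_mul, Finset.sum_const_zero]

lemma form_neg_left (v w : B → ℝ) : form M (-v) w = - form M v w := by
  have := form_add_left M (-v) v w
  simp only [neg_add_cancel, form_zero_left] at this
  linarith

lemma sroot_apply_same (x : B) : sroot x x = (1:ℝ) := Pi.single_eq_same x 1

lemma sroot_apply_ne {u x : B} (h : u ≠ x) : sroot x u = (0:ℝ) := Pi.single_eq_of_ne h 1

lemma form_sroot_right (v : B → ℝ) (x : B) :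
    form M v (sroot x) = ∑ u, v u * pairing M u x := by
  rw [form_def]
  apply Finset.sum_congr rfl; intro u _
  rw [Finset.sum_eq_single x]
  · rw [sroot_apply_same]; ring
  · intro b _ hb
    rw [sroot_apply_ne (Ne.symm (by exact fun h => hb h.symm))]
    ring
  · intro h; exact absurd (Finset.mem_univ x) h

lemma form_sroot_sroot (x y : B) : form M (sroot x) (sroot y) = pairing M x y := by
  rw [form_sroot_right]
  rw [Finset.sum_eq_single x]
  · rw [sroot_apply_same]; ring
  · intro b _ hb
    rw [sroot_apply_ne hb]; ring
  · intro h; exact absurd (Finset.mem_univ x) h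

lemma form_sroot_self (x : B) : form M (sroot x) (sroot x) = 1 := by
  rw [form_sroot_sroot, pairing_self]

lemma form_combo_sroot (a b : ℝ) (x y z : B) :
    form M (a • sroot x + b • sroot y) (sroot z)
      = a * pairing M x z + b * pairing M y z := by
  rw [form_add_left, form_smul_left, form_smul_left, form_sroot_sroot, form_sroot_sroot]

/-! ### the representation -/

variable (ρ : M.Group →* Module.End ℝ (B → ℝ))

lemma rho_mul_apply (a b : M.Group) (v : B → ℝ) : ρ (a * b) v = ρ a (ρ b v) := by
  rw [map_mul]; rfl

lemma rho_one_apply (v : B → ℝ) : ρ (1 : M.Group) v = v := by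
  rw [map_one]; rfl

lemma rho_inv_apply (a : M.Group) (v : B → ℝ) : ρ a⁻¹ (ρ a v) = v := by
  rw [← rho_mul_apply, inv_mul_cancel, rho_one_apply]

variable (hρ : ∀ (s : B) (v : B → ℝ),
      ρ (M.simple s) v = v - (2 * form M v (sroot s)) • sroot s)

include hρ

lemma sigma_sroot_self (x : B) : ρ (M.simple x) (sroot x) = -(sroot x) := by
  rw [hρ, form_sroot_self]
  ext u
  simp only [Pi.sub_apply, Pi.smul_apply, smul_eq_mul, Pi.neg_apply]
  ring

lemma sigma_invariant (x : B) (u v : B → ℝ) :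
    form M (ρ (M.simple x) u) (ρ (M.simple x) v) = form M u v := by
  rw [hρ, hρ, form_sub_left, form_sub_right, form_sub_right, form_smul_left, form_smul_left,
    form_smul_right, form_smul_right, form_sroot_self, form_comm M (sroot x) v]
  ring

lemma form_invariant' (w : M.Group) : ∀ u v : B → ℝ,
    form M (ρ w u) (ρ w v) = form M u v := by
  induction w using M.toCoxeterSystem.simple_induction with
  | simple i =>
    intro u v
    rw [CoxeterMatrix.toCoxeterSystem_simple]
    exact sigma_invariant M ρ hρ i u v
  | one => intro u v; rw [rho_one_apply, rho_one_apply]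
  | mul w w' h1 h2 =>
    intro u v
    rw [rho_mul_apply, rho_mul_apply, h1 _ _, h2 _ _]

lemma form_invariant (w : M.Group) (u v : B → ℝ) :
    form M (ρ w u) (ρ w v) = form M u v := form_invariant' M ρ hρ w u v

omit hρ

lemma isRoot_sroot (x : B) : IsRoot M ρ (sroot x) := ⟨1, x, rho_one_apply M ρ _⟩

lemma isRoot_map {lam : B → ℝ} (h : IsRoot M ρ lam) (g : M.Group) : IsRoot M ρ (ρ g lam) := by
  obtain ⟨w, x, hw⟩ := h
  exact ⟨g * w, x, by rw [rho_mul_apply, hw]⟩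

include hρ

lemma root_norm {lam : B → ℝ} (h : IsRoot M ρ lam) : form M lam lam = 1 := by
  obtain ⟨w, x, hw⟩ := h
  rw [← hw, form_invariant M ρ hρ, form_sroot_self]

lemma root_ne_zero {lam : B → ℝ} (h : IsRoot M ρ lam) : lam ≠ 0 := by
  intro h0
  have := root_norm M ρ hρ h
  rw [h0, form_zero_left] at this
  norm_num at this

lemma isRoot_neg {lam : B → ℝ} (h : IsRoot M ρ lam) : IsRoot M ρ (-lam) := by
  obtain ⟨w, x, hw⟩ := h
  refine ⟨w * M.simple x, x, ?_⟩
  rw [rho_mul_apply, sigma_sroot_self M ρ hρ, ← hw, map_neg]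

omit hρ

lemma eq_zero_of_isPos_isNeg {lam : B → ℝ} (h1 : IsPos lam) (h2 : IsNeg lam) : lam = 0 := by
  funext u
  exact le_antisymm (h2 u) (h1 u)

/-! ### rank-2 computations -/

noncomputable def dcoef (s t : B) (k : ℕ) : ℝ :=
  if M s t = 0 then k
  else Real.sin (k * (Real.pi / (M s t : ℝ))) / Real.sin (Real.pi / (M s t : ℝ))

lemma two_le_of_ne {s t : B} (hst : s ≠ t) (h0 : M s t ≠ 0) : 2 ≤ M s t := by
  have := M.off_diagonal s t hst
  omega

lemma sin_theta_pos {s t : B} (hst : s ≠ t) (h0 : M s t ≠ 0) :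
    0 < Real.sin (Real.pi / (M s t : ℝ)) := by
  have h2 : (2:ℝ) ≤ (M s t : ℝ) := by exact_mod_cast two_le_of_ne M hst h0
  apply Real.sin_pos_of_pos_of_lt_pi
  · positivity
  · have : Real.pi / (M s t : ℝ) ≤ Real.pi / 2 :=
      div_le_div_of_nonneg_left Real.pi_pos.le (by norm_num) h2
    linarith [Real.pi_pos]

lemma dcoef_zero (s t : B) : dcoef M s t 0 = 0 := by
  simp [dcoef]

lemma dcoef_one {s t : B} (hst : s ≠ t) : dcoef M s t 1 = 1 := by
  rw [dcoef]
  split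
  · norm_num
  · rename_i h0
    rw [Nat.cast_one, one_mul, div_self (sin_theta_pos M hst h0).ne']

lemma dcoef_rec {s t : B} (hst : s ≠ t) (k : ℕ) :
    dcoef M s t (k+2) = 2 * (-(pairing M s t)) * dcoef M s t (k+1) - dcoef M s t k := by
  rw [dcoef, dcoef, dcoef, pairing]
  split
  · push_cast; ring
  · rename_i h0
    have hsin := sin_theta_pos M hst h0
    set θ := Real.pi / (M s t : ℝ)
    have h1 : ((k:ℝ)+2) * θ = ((k:ℝ)+1)*θ + θ := by ring
    have h2 : (k:ℝ) * θ = ((k:ℝ)+1)*θ - θ := by ring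
    push_cast
    rw [h1, h2, Real.sin_add, Real.sin_sub]
    field_simp
    ring

lemma dcoef_nonneg_nice {s t : B} (hst : s ≠ t) (k : ℕ) (hk : M s t = 0 ∨ k ≤ M s t) :
    0 ≤ dcoef M s t k ∧ (dcoef M s t k = 0 ∨ 1 ≤ dcoef M s t k) := by
  rw [dcoef]
  split
  · constructor
    · positivity
    · rcases Nat.eq_zero_or_pos k with h | h
      · left; simp [h]
      · right; exact_mod_cast h
  · rename_i h0
    replace hk : k ≤ M s t := by tauto
    have hsin := sin_theta_pos M hst h0
    have h2 : (2:ℝ) ≤ (M s t : ℝ) := by exact_mod_cast two_le_of_ne M hst h0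
    set θ := Real.pi / (M s t : ℝ) with hθ
    have hθpos : 0 < θ := by positivity
    have hθhalf : θ ≤ Real.pi / 2 :=
      div_le_div_of_nonneg_left Real.pi_pos.le (by norm_num) h2
    have hMθ : (M s t : ℝ) * θ = Real.pi := by
      rw [hθ, mul_div_cancel₀]
      positivity
    have hkM : (k:ℝ) ≤ (M s t : ℝ) := by exact_mod_cast hk
    have hkθpi : (k:ℝ) * θ ≤ Real.pi := by
      rw [← hMθ]; exact mul_le_mul_of_nonneg_right hkM hθpos.le
    constructor
    · apply div_nonneg _ hsin.le
      exact Real.sin_nonneg_of_nonneg_of_le_pi (by positivity) hkθpi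
    · rcases Nat.eq_zero_or_pos k with hk0 | hk1
      · left; simp [hk0]
      · rcases Nat.eq_or_lt_of_le hk with hkeq | hklt
        · left
          rw [hkeq, hMθ, Real.sin_pi, zero_div]
        · right
          rw [le_div_iff₀ hsin, one_mul]
          have hk1' : (1:ℝ) ≤ (k:ℝ) := by exact_mod_cast hk1
          have hub : (k:ℝ) * θ ≤ Real.pi - θ := by
            have : (k:ℝ) ≤ (M s t : ℝ) - 1 := by
              have : (k:ℝ) + 1 ≤ (M s t:ℝ) := by exact_mod_cast hklt
              linarith
            nlinarith
          have hlb : θ ≤ (k:ℝ) * θ := by nlinarith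
          rcases le_or_gt ((k:ℝ) * θ) (Real.pi / 2) with hc | hc
          · exact Real.sin_le_sin_of_le_of_le_pi_div_two (by linarith) hc hlb
          · rw [show Real.sin ((k:ℝ)*θ) = Real.sin (Real.pi - (k:ℝ)*θ) from
                (Real.sin_pi_sub _).symm]
            apply Real.sin_le_sin_of_le_of_le_pi_div_two (by linarith)
            · linarith
            · linarith

include hρ in
lemma rho_alternating {s t : B} (hst : s ≠ t) (m : ℕ) :
    ρ (M.toCoxeterSystem.wordProd (CoxeterSystem.alternatingWord s t m)) (sroot s)
      = (if Even m then dcoef M s t (m+1) else dcoef M s t m) • sroot s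
        + (if Even m then dcoef M s t m else dcoef M s t (m+1)) • sroot t := by
  induction m with
  | zero =>
    simp only [Nat.zero_eq, Even.zero, if_true]
    rw [show CoxeterSystem.alternatingWord s t 0 = [] from rfl,
      CoxeterSystem.wordProd_nil, rho_one_apply, dcoef_zero, dcoef_one M hst]
    module
  | succ m ih =>
    rw [CoxeterSystem.alternatingWord_succ', CoxeterSystem.wordProd_cons,
      CoxeterMatrix.toCoxeterSystem_simple M, rho_mul_apply]
    by_cases hm : Even m
    · have hm1 : ¬ Even (m+1) := by simp [Nat.even_add_one, hm]
      rw [if_pos hm, ih, if_pos hm, if_pos hm, if_neg hm1, if_neg hm1]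
      rw [hρ, form_combo_sroot, pairing_self, dcoef_rec M hst m]
      module
    · have hm1 : Even (m+1) := Nat.even_add_one.mpr hm
      rw [if_neg hm, ih, if_neg hm, if_neg hm, if_pos hm1, if_pos hm1]
      rw [hρ, form_combo_sroot, pairing_self, dcoef_rec M hst m, pairing_comm M t s]
      module

/-! ### positivity theorem -/

def Nice (v : B → ℝ) : Prop := ∀ x, 0 ≤ v x ∧ (v x = 0 ∨ 1 ≤ v x)

lemma nice_sroot (x : B) : Nice (sroot x) := by
  intro u
  rcases eq_or_ne u x with h | h
  · subst h; rw [sroot_apply_same]; norm_num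
  · rw [sroot_apply_ne h]; norm_num

lemma nice_combo {a b : ℝ} {v w : B → ℝ} (han : 0 ≤ a) (ha : a = 0 ∨ 1 ≤ a)
    (hbn : 0 ≤ b) (hb : b = 0 ∨ 1 ≤ b) (hv : Nice v) (hw : Nice w) :
    Nice (a • v + b • w) := by
  intro x
  obtain ⟨hv0, hv1⟩ := hv x
  obtain ⟨hw0, hw1⟩ := hw x
  have e : (a • v + b • w) x = a * v x + b * w x := rfl
  rw [e]
  constructor
  · positivity
  · have h1 : a * v x = 0 ∨ 1 ≤ a * v x := by
      rcases ha with h | h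
      · left; rw [h, zero_mul]
      · rcases hv1 with h' | h'
        · left; rw [h', mul_zero]
        · right; nlinarith
    have h2 : b * w x = 0 ∨ 1 ≤ b * w x := by
      rcases hb with h | h
      · left; rw [h, zero_mul]
      · rcases hw1 with h' | h'
        · left; rw [h', mul_zero]
        · right; nlinarith
    have hn1 : 0 ≤ a * v x := by positivity
    have hn2 : 0 ≤ b * w x := by positivity
    rcases h1 with h1 | h1 <;> rcases h2 with h2 | h2
    · left; rw [h1, h2, add_zero]
    · right; linarith
    · right; linarith
    · right; linarith

include hρ in
theorem nice_rho_sroot (n : ℕ) : ∀ (w : M.Group) (s : B), M.toCoxeterSystem.length w = n →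
    M.toCoxeterSystem.length (w * M.simple s) = n + 1 → Nice (ρ w (sroot s)) := by
  induction n using Nat.strong_induction_on with
  | _ n ih =>
  intro w s hw hws
  set cs := M.toCoxeterSystem with hcs
  rcases Nat.eq_zero_or_pos n with hn0 | hnpos
  · subst hn0
    have hw1 : w = 1 := cs.length_eq_zero_iff.mp hw
    subst hw1
    rw [rho_one_apply]
    exact nice_sroot s
  -- pick a right descent t
  have hw1 : w ≠ 1 := by
    intro h; rw [h, cs.length_one] at hw; omega
  obtain ⟨t, ht⟩ := cs.exists_rightDescent_of_ne_one hw1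
  have hlt : cs.length (w * M.simple t) + 1 = n := by
    have h2 : cs.length (w * M.simple t) = cs.length w + 1 ∨
        cs.length (w * M.simple t) + 1 = cs.length w := cs.length_mul_simple w t
    have ht' : cs.length (w * M.simple t) < cs.length w := ht
    rw [hw] at h2 ht'
    rcases h2 with h | h
    · omega
    · exact h
  have hts : t ≠ s := by
    intro h
    rw [h] at hlt
    omega
  classical
  -- maximal alternating suffix
  set Q : ℕ → Prop := fun m =>
    cs.length (w * (cs.wordProd (CoxeterSystem.alternatingWord s t m))⁻¹) + m = n with hQdef
  have hQ1 : Q 1 := by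
    have h1 : CoxeterSystem.alternatingWord s t 1 = [t] := rfl
    rw [hQdef]
    simp only [h1, CoxeterSystem.wordProd_singleton, cs.inv_simple]
    exact hlt
  set mstar := Nat.findGreatest Q n with hmstar
  have hm1 : 1 ≤ mstar := Nat.le_findGreatest hnpos hQ1
  have hQm : Q mstar := Nat.findGreatest_spec hnpos hQ1
  set u := w * (cs.wordProd (CoxeterSystem.alternatingWord s t mstar))⁻¹ with hu
  have hulen : cs.length u + mstar = n := hQm
  have hw_dec : w = u * cs.wordProd (CoxeterSystem.alternatingWord s t mstar) := by
    rw [hu]; group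
  -- both letters ascend from u
  have hext : ∀ y : B, (if Even mstar then t else s) = y →
      cs.length (u * M.simple y) = cs.length u + 1 := by
    intro y hy
    rcases cs.length_mul_simple u y with h0 | h0
    · exact h0
    · exfalso
      have h : cs.length (u * M.simple y) + 1 = cs.length u := h0
      have hstep : cs.wordProd (CoxeterSystem.alternatingWord s t (mstar+1))
          = cs.simple y * cs.wordProd (CoxeterSystem.alternatingWord s t mstar) := by
        rw [CoxeterSystem.alternatingWord_succ', CoxeterSystem.wordProd_cons, hy]
      have heq : w * (cs.wordProd (CoxeterSystem.alternatingWord s t (mstar+1)))⁻¹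
          = u * M.simple y := by
        rw [hstep, mul_inv_rev, hu, cs.inv_simple, mul_assoc]
        rfl
      have hQm1 : Q (mstar + 1) := by
        show cs.length (w * (cs.wordProd (CoxeterSystem.alternatingWord s t (mstar+1)))⁻¹)
            + (mstar + 1) = n
        rw [heq]
        omega
      have hle : mstar + 1 ≤ n := by
        have hQm1' : cs.length (w * (cs.wordProd
            (CoxeterSystem.alternatingWord s t (mstar+1)))⁻¹) + (mstar + 1) = n := hQm1
        omega
      exact Nat.findGreatest_is_greatest (by omega) hle hQm1
  have hother : ∀ z : B, (if Even mstar then s else t) = z →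
      cs.length (u * M.simple z) = cs.length u + 1 := by
    intro z hz
    rcases cs.length_mul_simple u z with h0 | h0
    · exact h0
    · exfalso
      have h : cs.length (u * M.simple z) + 1 = cs.length u := h0
      obtain ⟨m0, hm0⟩ : ∃ m0, m0 + 1 = mstar := ⟨mstar - 1, by omega⟩
      have hz' : (if Even m0 then t else s) = z := by
        have : Even mstar ↔ ¬ Even m0 := by
          rw [← hm0, Nat.even_add_one]
        rcases Nat.even_or_odd m0 with he | ho
        · have : ¬ Even mstar := by rw [this]; simp [he]
          rw [if_pos he]
          rw [if_neg this] at hz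
          exact hz
        · have he' : ¬ Even m0 := Nat.not_even_iff_odd.mpr ho
          have : Even mstar := by rw [this]; exact he'
          rw [if_neg he']
          rw [if_pos this] at hz
          exact hz
      have hsplit : cs.wordProd (CoxeterSystem.alternatingWord s t mstar)
          = cs.simple z * cs.wordProd (CoxeterSystem.alternatingWord s t m0) := by
        rw [← hm0, CoxeterSystem.alternatingWord_succ', CoxeterSystem.wordProd_cons, hz']
      have hwled : cs.length w ≤ cs.length (u * M.simple z) +
          cs.length (cs.wordProd (CoxeterSystem.alternatingWord s t m0)) := by
        calc cs.length w = cs.length ((u * M.simple z) *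
            cs.wordProd (CoxeterSystem.alternatingWord s t m0)) := by
              rw [hw_dec, hsplit, ← mul_assoc]
              rfl
        _ ≤ _ := cs.length_mul_le _ _
      have hm0len : cs.length (cs.wordProd (CoxeterSystem.alternatingWord s t m0)) ≤ m0 := by
        have := cs.length_wordProd_le (CoxeterSystem.alternatingWord s t m0)
        rwa [CoxeterSystem.length_alternatingWord] at this
      rw [hw] at hwled
      omega
  have hus : cs.length (u * M.simple s) = cs.length u + 1 := by
    rcases Nat.even_or_odd mstar with he | ho
    · exact hother s (if_pos he)
    · exact hext s (if_neg (Nat.not_even_iff_odd.mpr ho))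
  have hut : cs.length (u * M.simple t) = cs.length u + 1 := by
    rcases Nat.even_or_odd mstar with he | ho
    · exact hext t (if_pos he)
    · exact hother t (if_neg (Nat.not_even_iff_odd.mpr ho))
  -- the alternating word is short enough
  have hM : M s t = 0 ∨ mstar + 1 ≤ M s t := by
    by_contra hcon
    push_neg at hcon
    obtain ⟨hM0, hMlt⟩ := hcon
    have hsplit : w * M.simple s = u * cs.wordProd (CoxeterSystem.alternatingWord t s (mstar+1)) := by
      rw [hw_dec, CoxeterSystem.alternatingWord_succ, CoxeterSystem.wordProd_concat, mul_assoc]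
      rfl
    have hnr : ¬ cs.IsReduced (CoxeterSystem.alternatingWord t s (mstar+1)) := by
      apply cs.not_isReduced_alternatingWord t s
      · rw [← M.symmetric s t]; exact hM0
      · rw [← M.symmetric s t]; omega
    have hlen2 : cs.length (cs.wordProd (CoxeterSystem.alternatingWord t s (mstar+1))) ≤ mstar := by
      have hle := cs.length_wordProd_le (CoxeterSystem.alternatingWord t s (mstar+1))
      rw [CoxeterSystem.length_alternatingWord] at hle
      have hne : cs.length (cs.wordProd (CoxeterSystem.alternatingWord t s (mstar+1)))
          ≠ mstar + 1 := by
        intro h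
        apply hnr
        unfold CoxeterSystem.IsReduced
        rw [CoxeterSystem.length_alternatingWord, h]
      omega
    have : cs.length (w * M.simple s) ≤ cs.length u + mstar := by
      calc cs.length (w * M.simple s)
          = cs.length (u * cs.wordProd (CoxeterSystem.alternatingWord t s (mstar+1))) := by
            rw [hsplit]
        _ ≤ cs.length u + cs.length (cs.wordProd (CoxeterSystem.alternatingWord t s (mstar+1))) :=
            cs.length_mul_le _ _
        _ ≤ cs.length u + mstar := by omega
    rw [hws] at this
    omega
  -- use the dihedral formula
  have hformula := rho_alternating M ρ hρ hts.symm mstar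
  rw [← hcs] at hformula
  have hdecomp : ρ w (sroot s) = ρ u (ρ (cs.wordProd (CoxeterSystem.alternatingWord s t mstar))
      (sroot s)) := by
    rw [hw_dec, rho_mul_apply]
  rw [hdecomp, hformula, map_add, map_smul, map_smul]
  have hd1 := dcoef_nonneg_nice M hts.symm mstar (hM.imp id (fun h => by omega))
  have hd2 := dcoef_nonneg_nice M hts.symm (mstar+1) hM
  have hnice_s : Nice (ρ u (sroot s)) := by
    apply ih (cs.length u) (by omega) u s rfl
    exact hus
  have hnice_t : Nice (ρ u (sroot t)) := by
    apply ih (cs.length u) (by omega) u t rfl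
    exact hut
  have key : ∀ a b : ℝ, 0 ≤ a → (a = 0 ∨ 1 ≤ a) → 0 ≤ b → (b = 0 ∨ 1 ≤ b) →
      Nice (a • ρ u (sroot s) + b • ρ u (sroot t)) :=
    fun a b h1 h2 h3 h4 => nice_combo h1 h2 h3 h4 hnice_s hnice_t
  rcases Nat.even_or_odd mstar with he | ho
  · rw [if_pos he, if_pos he]
    exact key _ _ hd2.1 hd2.2 hd1.1 hd1.2
  · have ho' : ¬ Even mstar := Nat.not_even_iff_odd.mpr ho
    rw [if_neg ho', if_neg ho']
    exact key _ _ hd1.1 hd1.2 hd2.1 hd2.2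

/-! ### dichotomy and corollaries -/

include hρ

lemma isPos_of_ascent {w : M.Group} {s : B}
    (h : M.toCoxeterSystem.length (w * M.simple s) = M.toCoxeterSystem.length w + 1) :
    IsPos (ρ w (sroot s)) := by
  intro x
  exact (nice_rho_sroot M ρ hρ (M.toCoxeterSystem.length w) w s rfl h x).1

lemma nice_of_ascent {w : M.Group} {s : B}
    (h : M.toCoxeterSystem.length (w * M.simple s) = M.toCoxeterSystem.length w + 1) :
    Nice (ρ w (sroot s)) :=
  nice_rho_sroot M ρ hρ (M.toCoxeterSystem.length w) w s rfl h

lemma isNeg_of_descent {w : M.Group} {s : B}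
    (h : M.toCoxeterSystem.length (w * M.simple s) + 1 = M.toCoxeterSystem.length w) :
    IsNeg (ρ w (sroot s)) := by
  set cs := M.toCoxeterSystem
  set w' := w * M.simple s with hw'
  have hww : w = w' * M.simple s := by
    rw [hw', mul_assoc]
    have : M.simple s * M.simple s = 1 := cs.simple_mul_simple_self s
    rw [this, mul_one]
  have hlen : cs.length (w' * M.simple s) = cs.length w' + 1 := by
    rw [← hww]; omega
  have hpos := isPos_of_ascent M ρ hρ hlen
  have : ρ w (sroot s) = - (ρ w' (sroot s)) := by
    rw [hww, rho_mul_apply, sigma_sroot_self M ρ hρ, map_neg]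
  rw [this]
  intro x
  simp only [Pi.neg_apply, neg_nonpos]
  exact hpos x

lemma root_pos_or_neg {lam : B → ℝ} (h : IsRoot M ρ lam) : IsPos lam ∨ IsNeg lam := by
  obtain ⟨w, s, rfl⟩ := h
  rcases M.toCoxeterSystem.length_mul_simple w s with h | h
  · exact Or.inl (isPos_of_ascent M ρ hρ h)
  · exact Or.inr (isNeg_of_descent M ρ hρ h)

lemma isPos_of_not_neg {lam : B → ℝ} (h : IsRoot M ρ lam) (hn : ¬ IsNeg lam) : IsPos lam :=
  (root_pos_or_neg M ρ hρ h).resolve_right hn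

lemma isNeg_of_not_pos {lam : B → ℝ} (h : IsRoot M ρ lam) (hn : ¬ IsPos lam) : IsNeg lam :=
  (root_pos_or_neg M ρ hρ h).resolve_left hn

lemma nice_of_isPosRoot {lam : B → ℝ} (h : IsPosRoot M ρ lam) : Nice lam := by
  obtain ⟨⟨w, s, rfl⟩, hp⟩ := h
  rcases M.toCoxeterSystem.length_mul_simple w s with h | h
  · exact nice_of_ascent M ρ hρ h
  · exfalso
    have hneg := isNeg_of_descent M ρ hρ h
    exact root_ne_zero M ρ hρ (isRoot_map M ρ (isRoot_sroot M ρ s) w)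
      (eq_zero_of_isPos_isNeg hp hneg)

lemma eq_sroot_of_single {lam : B → ℝ} (h : IsRoot M ρ lam) (hp : IsPos lam) (r : B)
    (hz : ∀ u, u ≠ r → lam u = 0) : lam = sroot r := by
  have hlam : lam = lam r • sroot r := by
    funext x
    rcases eq_or_ne x r with hx | hx
    · subst hx
      simp only [Pi.smul_apply, smul_eq_mul]
      rw [sroot_apply_same]; ring
    · rw [hz x hx]
      simp only [Pi.smul_apply, smul_eq_mul]
      rw [sroot_apply_ne hx]; ring
  have hnorm := root_norm M ρ hρ h
  rw [hlam, form_smul_left, form_smul_right, form_sroot_self, mul_one] at hnorm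
  have : lam r = 1 := by
    have h0 : 0 ≤ lam r := hp r
    nlinarith
  rw [hlam, this, one_smul]

lemma sigma_isPosRoot {lam : B → ℝ} (h : IsPosRoot M ρ lam) (r : B) (hne : lam ≠ sroot r) :
    IsPosRoot M ρ (ρ (M.simple r) lam) := by
  obtain ⟨hroot, hpos⟩ := h
  have hroot' : IsRoot M ρ (ρ (M.simple r) lam) := isRoot_map M ρ hroot _
  refine ⟨hroot', ?_⟩
  obtain ⟨u, hur, hu⟩ : ∃ u, u ≠ r ∧ 0 < lam u := by
    by_contra hcon
    push_neg at hcon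
    apply hne
    apply eq_sroot_of_single M ρ hρ hroot hpos r
    intro x hx
    exact le_antisymm (hcon x hx) (hpos x)
  apply isPos_of_not_neg M ρ hρ hroot'
  intro hneg
  have := hneg u
  rw [hρ] at this
  simp only [Pi.sub_apply, Pi.smul_apply, smul_eq_mul] at this
  rw [sroot_apply_ne hur, mul_zero, sub_zero] at this
  linarith

lemma sigma_sigma (x : B) (v : B → ℝ) : ρ (M.simple x) (ρ (M.simple x) v) = v := by
  rw [← rho_mul_apply]
  have : M.simple x * M.simple x = 1 := M.toCoxeterSystem.simple_mul_simple_self x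
  rw [this, rho_one_apply]

omit hρ

lemma rho_injective (w : M.Group) {v v' : B → ℝ} (h : ρ w v = ρ w v') : v = v' := by
  have := congrArg (ρ w⁻¹) h
  rwa [rho_inv_apply, rho_inv_apply] at this

include hρ

lemma finite_neg_set (n : ℕ) : ∀ w : M.Group, M.toCoxeterSystem.length w = n →
    {lam : B → ℝ | IsPosRoot M ρ lam ∧ IsNeg (ρ w lam)}.Finite := by
  induction n using Nat.strong_induction_on with
  | _ n ih =>
  intro w hw
  set cs := M.toCoxeterSystem
  rcases Nat.eq_zero_or_pos n with hn0 | hnpos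
  · subst hn0
    have hw1 : w = 1 := cs.length_eq_zero_iff.mp hw
    subst hw1
    convert Set.finite_empty
    rw [Set.eq_empty_iff_forall_notMem]
    rintro lam ⟨⟨hroot, hpos⟩, hneg⟩
    rw [rho_one_apply] at hneg
    exact root_ne_zero M ρ hρ hroot (eq_zero_of_isPos_isNeg hpos hneg)
  · have hw1 : w ≠ 1 := by
      intro h; rw [h, cs.length_one] at hw; omega
    obtain ⟨t, ht⟩ := cs.exists_rightDescent_of_ne_one hw1
    set w' := w * M.simple t with hw'
    have hww : w = w' * M.simple t := by
      rw [hw', mul_assoc]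
      have : M.simple t * M.simple t = 1 := cs.simple_mul_simple_self t
      rw [this, mul_one]
    have hlen : cs.length w' + 1 = n := by
      have h2 : cs.length (w * M.simple t) = cs.length w + 1 ∨
          cs.length (w * M.simple t) + 1 = cs.length w := cs.length_mul_simple w t
      have ht' : cs.length (w * M.simple t) < cs.length w := ht
      rw [hw] at h2 ht'
      rcases h2 with h | h
      · omega
      · exact h
    have hfin' := ih (cs.length w') (by omega) w' rfl
    apply Set.Finite.subset (Set.Finite.insert (sroot t)
      (Set.Finite.image (ρ (M.simple t)) hfin'))
    rintro lam ⟨hposroot, hneg⟩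
    rcases eq_or_ne lam (sroot t) with hlam | hlam
    · exact Set.mem_insert_iff.mpr (Or.inl hlam)
    · right
      refine ⟨ρ (M.simple t) lam, ⟨sigma_isPosRoot M ρ hρ hposroot t hlam, ?_⟩,
        sigma_sigma M ρ hρ t lam⟩
      have : ρ w' (ρ (M.simple t) lam) = ρ w lam := by
        rw [← rho_mul_apply, ← hww]
      rw [this]
      exact hneg

/-! ### reflections in roots and the ladder -/

omit hρ in
lemma rho_apply_inv (a : M.Group) (v : B → ℝ) : ρ a (ρ a⁻¹ v) = v := by
  rw [← rho_mul_apply, mul_inv_cancel, rho_one_apply]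

lemma refl_apply (v : M.Group) (x : B) (u : B → ℝ) :
    ρ (v * M.simple x * v⁻¹) u
      = u - (2 * form M u (ρ v (sroot x))) • (ρ v (sroot x)) := by
  rw [rho_mul_apply, rho_mul_apply, hρ, map_sub, map_smul, rho_apply_inv]
  have hf : form M (ρ v⁻¹ u) (sroot x) = form M u (ρ v (sroot x)) := by
    rw [← form_invariant M ρ hρ v (ρ v⁻¹ u) (sroot x), rho_apply_inv]
  rw [hf]

/-- Chebyshev-like coefficient pairs. -/
noncomputable def lad (c : ℝ) : ℕ → ℝ × ℝ
  | 0 => (1, 0)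
  | (j+1) => ((lad c j).1 * (4*c^2-1) + 2*(lad c j).2*c, -(lad c j).2 - 2*(lad c j).1*c)

omit hρ in
lemma lad_invariant {c : ℝ} (hc : 1 ≤ c) (j : ℕ) :
    1 + 2*(j:ℝ) ≤ (lad c j).1 ∧ (lad c j).2 ≤ 0 ∧ -(lad c j).2 ≤ (lad c j).1 - 1 := by
  induction j with
  | zero => simp [lad]
  | succ j ih =>
    obtain ⟨h1, h2, h3⟩ := ih
    have hj : (0:ℝ) ≤ (j:ℝ) := Nat.cast_nonneg j
    have hrec : lad c (j+1) = ((lad c j).1 * (4*c^2-1) + 2*(lad c j).2*c,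
        -(lad c j).2 - 2*(lad c j).1*c) := rfl
    have ha1 : (1:ℝ) ≤ (lad c j).1 := by linarith
    have hkey : (0:ℝ) ≤ (c - 1) * (2*c+1) * (lad c j).1 :=
      mul_nonneg (mul_nonneg (by linarith) (by linarith)) (by linarith)
    have hkey2 : (0:ℝ) ≤ (c - 1) * c * (lad c j).1 :=
      mul_nonneg (mul_nonneg (by linarith) (by linarith)) (by linarith)
    have hbc : (1 - (lad c j).1) * c ≤ (lad c j).2 * c :=
      mul_le_mul_of_nonneg_right (by linarith) (by linarith)
    have hac : (lad c j).1 ≤ (lad c j).1 * c := le_mul_of_one_le_right (by linarith) hc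
    refine ⟨?_, ?_, ?_⟩
    · rw [hrec]
      push_cast
      nlinarith
    · rw [hrec]
      simp only
      nlinarith
    · rw [hrec]
      simp only
      nlinarith

omit hρ in
lemma lad_fst_mono {c : ℝ} (hc : 1 ≤ c) (j : ℕ) : (lad c j).1 + 2 ≤ (lad c (j+1)).1 := by
  obtain ⟨h1, h2, h3⟩ := lad_invariant hc j
  have hj : (0:ℝ) ≤ (j:ℝ) := Nat.cast_nonneg j
  have ha1 : (1:ℝ) ≤ (lad c j).1 := by linarith
  have hkey : (0:ℝ) ≤ (c - 1) * (2*c+1) * (lad c j).1 :=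
    mul_nonneg (mul_nonneg (by linarith) (by linarith)) (by linarith)
  have hbc : (1 - (lad c j).1) * c ≤ (lad c j).2 * c :=
    mul_le_mul_of_nonneg_right (by linarith) (by linarith)
  show (lad c j).1 + 2 ≤ (lad c j).1 * (4*c^2-1) + 2*(lad c j).2*c
  nlinarith

omit hρ in
lemma lad_fst_strictMono {c : ℝ} (hc : 1 ≤ c) : StrictMono (fun j => (lad c j).1) := by
  apply strictMono_nat_of_lt_succ
  intro j
  show (lad c j).1 < (lad c (j+1)).1
  linarith [lad_fst_mono hc j]

include hρ in
lemma no_double_witness {gam bet : B → ℝ} (hg : IsPosRoot M ρ gam) (hb : IsPosRoot M ρ bet)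
    (hc : 1 ≤ form M gam bet) (w₁ w₂ : M.Group)
    (h1b : IsPos (ρ w₁ bet)) (h1g : IsNeg (ρ w₁ gam))
    (h2g : IsPos (ρ w₂ gam)) (h2b : IsNeg (ρ w₂ bet)) : False := by
  obtain ⟨vg, xg, hvg⟩ := hg.1
  obtain ⟨vb, xb, hvb⟩ := hb.1
  set c := form M gam bet with hcdef
  have hgamnorm : form M gam gam = 1 := root_norm M ρ hρ ⟨vg, xg, hvg⟩
  have hbetnorm : form M bet bet = 1 := root_norm M ρ hρ ⟨vb, xb, hvb⟩
  have hgb_ne : gam ≠ bet := by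
    intro h
    have hz : ρ w₁ bet = 0 := eq_zero_of_isPos_isNeg h1b (h ▸ h1g)
    have hb0 : bet = 0 := by
      apply rho_injective M ρ w₁
      rw [hz, map_zero]
    exact root_ne_zero M ρ hρ ⟨vb, xb, hvb⟩ hb0
  have hrg : ∀ u, ρ (vg * M.simple xg * vg⁻¹) u = u - (2 * form M u gam) • gam := by
    intro u; rw [refl_apply M ρ hρ, hvg]
  have hrb : ∀ u, ρ (vb * M.simple xb * vb⁻¹) u = u - (2 * form M u bet) • bet := by
    intro u; rw [refl_apply M ρ hρ, hvb]
  -- the ladder of roots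
  set chi : ℕ → (B → ℝ) := fun j => (lad c j).1 • gam + (lad c j).2 • bet with hchi
  have hchiform : ∀ a b : ℝ, form M (a • gam + b • bet) bet = a * c + b := by
    intro a b
    rw [form_add_left, form_smul_left, form_smul_left, hbetnorm, ← hcdef]
    ring
  have hchistep : ∀ j, chi (j+1)
      = ρ (vg * M.simple xg * vg⁻¹) (ρ (vb * M.simple xb * vb⁻¹) (chi j)) := by
    intro j
    rw [hrb (chi j)]
    have h1 : form M (chi j) bet = (lad c j).1 * c + (lad c j).2 := by
      rw [hchi]; exact hchiform _ _
    rw [h1]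
    have e1 : chi j - (2 * ((lad c j).1 * c + (lad c j).2)) • bet
        = (lad c j).1 • gam + (-(lad c j).2 - 2*(lad c j).1*c) • bet := by
      rw [hchi]; module
    rw [e1, hrg]
    have h2 : form M ((lad c j).1 • gam + (-(lad c j).2 - 2*(lad c j).1*c) • bet) gam
        = (lad c j).1 + (-(lad c j).2 - 2*(lad c j).1*c) * c := by
      rw [form_add_left, form_smul_left, form_smul_left, hgamnorm, form_comm M bet gam, ← hcdef]
      ring
    rw [h2]
    show (lad c (j+1)).1 • gam + (lad c (j+1)).2 • bet = _
    rw [show lad c (j+1) = ((lad c j).1 * (4*c^2-1) + 2*(lad c j).2*c,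
        -(lad c j).2 - 2*(lad c j).1*c) from rfl]
    simp only
    module
  have hchiroot : ∀ j, IsRoot M ρ (chi j) := by
    intro j
    induction j with
    | zero =>
      have : chi 0 = gam := by
        rw [hchi]
        show (lad c 0).1 • gam + (lad c 0).2 • bet = gam
        rw [show lad c 0 = (1, 0) from rfl]
        module
      rw [this]
      exact ⟨vg, xg, hvg⟩
    | succ j ih =>
      rw [hchistep j]
      exact isRoot_map M ρ (isRoot_map M ρ ih _) _
  -- sign properties
  have hneg1 : ∀ j, IsNeg (ρ w₁ (chi j)) := by
    intro j x
    obtain ⟨ha, hb', _⟩ := lad_invariant hc j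
    have e : ρ w₁ (chi j) = (lad c j).1 • (ρ w₁ gam) + (lad c j).2 • (ρ w₁ bet) := by
      rw [hchi]
      simp only [map_add, map_smul]
    rw [e]
    have := h1g x
    have := h1b x
    have hja : (0:ℝ) ≤ (lad c j).1 := by
      have : (0:ℝ) ≤ 1 + 2*(j:ℝ) := by positivity
      linarith
    simp only [Pi.add_apply, Pi.smul_apply, smul_eq_mul]
    nlinarith
  have hpos2 : ∀ j, IsPos (ρ w₂ (chi j)) := by
    intro j x
    obtain ⟨ha, hb', _⟩ := lad_invariant hc j
    have e : ρ w₂ (chi j) = (lad c j).1 • (ρ w₂ gam) + (lad c j).2 • (ρ w₂ bet) := by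
      rw [hchi]
      simp only [map_add, map_smul]
    rw [e]
    have := h2g x
    have := h2b x
    have hja : (0:ℝ) ≤ (lad c j).1 := by
      have : (0:ℝ) ≤ 1 + 2*(j:ℝ) := by positivity
      linarith
    simp only [Pi.add_apply, Pi.smul_apply, smul_eq_mul]
    nlinarith
  -- injectivity of the ladder
  have hinj : Function.Injective chi := by
    intro j j' hjj
    by_contra hne
    have haij : (lad c j).1 ≠ (lad c j').1 := by
      intro h
      exact hne ((lad_fst_strictMono hc).injective h)
    have hrearr : ((lad c j).1 - (lad c j').1) • gam = ((lad c j').2 - (lad c j).2) • bet := by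
      have := hjj
      rw [hchi] at this
      have e := congrArg (fun v => v - (lad c j').1 • gam - (lad c j).2 • bet) this
      simp only at e
      -- e : ... rearrange
      have : (lad c j).1 • gam + (lad c j).2 • bet - (lad c j').1 • gam - (lad c j).2 • bet
          = ((lad c j).1 - (lad c j').1) • gam := by module
      rw [this] at e
      have : (lad c j').1 • gam + (lad c j').2 • bet - (lad c j').1 • gam - (lad c j).2 • bet
          = ((lad c j').2 - (lad c j).2) • bet := by module
      rw [this] at e
      exact e
    set d := ((lad c j').2 - (lad c j).2) / ((lad c j).1 - (lad c j').1) with hd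
    have hgamd : gam = d • bet := by
      have hne0 : (lad c j).1 - (lad c j').1 ≠ 0 := sub_ne_zero.mpr haij
      have := congrArg (fun v => (((lad c j).1 - (lad c j').1)⁻¹) • v) hrearr
      simp only [smul_smul, inv_mul_cancel₀ hne0, one_smul] at this
      rw [this, hd, div_eq_inv_mul]
    have hc1 : c = d := by
      rw [hcdef, hgamd, form_smul_left, hbetnorm, mul_one]
    have hd2 : d * d = 1 := by
      have := hgamnorm
      rw [hgamd, form_smul_left, form_smul_right, hbetnorm, mul_one] at this
      linarith [this]
    have : d = 1 := by nlinarith [hc1 ▸ hc]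
    exact hgb_ne (by rw [hgamd, this, one_smul])
  -- the finite sets
  have hfin1 := finite_neg_set M ρ hρ (M.toCoxeterSystem.length w₁) w₁ rfl
  have hfin2 := finite_neg_set M ρ hρ (M.toCoxeterSystem.length w₂) w₂ rfl
  have hfinS : ({lam : B → ℝ | IsPosRoot M ρ lam ∧ IsNeg (ρ w₁ lam)}
      ∪ (fun v : B → ℝ => -v) '' {lam : B → ℝ | IsPosRoot M ρ lam ∧ IsNeg (ρ w₂ lam)}).Finite :=
    Set.Finite.union hfin1 (Set.Finite.image _ hfin2)
  have hsub : Set.range chi ⊆ ({lam : B → ℝ | IsPosRoot M ρ lam ∧ IsNeg (ρ w₁ lam)}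
      ∪ (fun v : B → ℝ => -v) '' {lam : B → ℝ | IsPosRoot M ρ lam ∧ IsNeg (ρ w₂ lam)}) := by
    rintro _ ⟨j, rfl⟩
    rcases root_pos_or_neg M ρ hρ (hchiroot j) with hp | hn
    · left
      exact ⟨⟨hchiroot j, hp⟩, hneg1 j⟩
    · right
      refine ⟨-(chi j), ⟨⟨isRoot_neg M ρ hρ (hchiroot j), ?_⟩, ?_⟩, by simp⟩
      · intro x
        simp only [Pi.neg_apply, Left.nonneg_neg_iff]
        exact hn x
      · intro x
        rw [map_neg]
        simp only [Pi.neg_apply, neg_nonpos]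
        exact hpos2 j x
  exact (hfinS.subset hsub).not_infinite (Set.infinite_range_of_injective hinj)

end S19

end S19Aux


theorem statement19 [DecidableEq B] [Fintype B] (M : CoxeterMatrix B)
    (ρ : M.Group →* Module.End ℝ (B → ℝ))
    (hρ : ∀ (s : B) (v : B → ℝ),
      ρ (M.simple s) v = v - (2 * form M v (sroot s)) • sroot s)
    (lam : B → ℝ) (hlam : IsMinimal M ρ lam) (t : B) (ht : t ∈ supp lam)
    (h1 : lam t = 1)
    (h4 : 4 ≤ {u : B | u ∈ supp lam ∧ u ≠ t ∧ (coxGraph M).Adj t u}.ncard) :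
    IsPosRoot M ρ (ρ (M.simple t) lam) ∧
      ¬ IsMinimal M ρ (ρ (M.simple t) lam) := by
  classical
  obtain ⟨⟨hlroot, hlpos⟩, hlmin⟩ := hlam
  have hnice : S19.Nice lam := S19.nice_of_isPosRoot M ρ hρ ⟨hlroot, hlpos⟩
  -- the key inner product bound
  set A : Set B := {u : B | u ∈ supp lam ∧ u ≠ t ∧ (coxGraph M).Adj t u} with hA
  have hAfin : A.Finite := Set.toFinite A
  set F : Finset B := hAfin.toFinset with hF
  have hFcard : 4 ≤ F.card := by
    rwa [hF, ← Set.ncard_eq_toFinset_card A hAfin]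
  have hFmem : ∀ u ∈ F, u ∈ supp lam ∧ u ≠ t ∧ (coxGraph M).Adj t u := by
    intro u hu
    rw [hF, Set.Finite.mem_toFinset] at hu
    exact hu
  have hFsub : F ⊆ Finset.univ.erase t := by
    intro u hu
    exact Finset.mem_erase.mpr ⟨(hFmem u hu).2.1, Finset.mem_univ u⟩
  have hc0 : form M lam (sroot t) ≤ -1 := by
    rw [S19.form_sroot_right]
    have hsplit : ∑ u, lam u * pairing M u t
        = lam t * pairing M t t + ∑ u ∈ Finset.univ.erase t, lam u * pairing M u t :=
      (Finset.add_sum_erase _ (fun u => lam u * pairing M u t) (Finset.mem_univ t)).symm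
    rw [hsplit, h1, S19.pairing_self, one_mul]
    have hstep1 : ∑ u ∈ Finset.univ.erase t, lam u * pairing M u t
        ≤ ∑ u ∈ F, lam u * pairing M u t := by
      have hsd : ∑ u ∈ Finset.univ.erase t \ F, lam u * pairing M u t
          + ∑ u ∈ F, lam u * pairing M u t
          = ∑ u ∈ Finset.univ.erase t, lam u * pairing M u t :=
        Finset.sum_sdiff hFsub
      have hnp : ∑ u ∈ Finset.univ.erase t \ F, lam u * pairing M u t ≤ 0 := by
        apply Finset.sum_nonpos
        intro u hu
        have hut : u ≠ t := (Finset.mem_erase.mp (Finset.mem_sdiff.mp hu).1).1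
        exact mul_nonpos_of_nonneg_of_nonpos (hlpos u) (S19.pairing_nonpos M hut)
      linarith
    have hstep2 : ∑ u ∈ F, lam u * pairing M u t ≤ ∑ _u ∈ F, (-(1/2) : ℝ) := by
      apply Finset.sum_le_sum
      intro u hu
      obtain ⟨hsupp, hut, hadj⟩ := hFmem u hu
      have hlu : 1 ≤ lam u := by
        rcases (hnice u).2 with h | h
        · exact absurd h hsupp
        · exact h
      have hp : pairing M u t ≤ -(1/2) := by
        apply S19.pairing_le_neg_half M hut
        obtain ⟨-, hadj2⟩ := hadj
        rw [M.symmetric u t]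
        exact hadj2
      calc lam u * pairing M u t ≤ 1 * pairing M u t :=
            mul_le_mul_of_nonpos_right hlu (by linarith)
        _ = pairing M u t := one_mul _
        _ ≤ -(1/2) := hp
    have hstep3 : ∑ _u ∈ F, (-(1/2) : ℝ) = -(F.card : ℝ)/2 := by
      rw [Finset.sum_const, nsmul_eq_mul]
      ring
    have hcard4 : (4:ℝ) ≤ (F.card : ℝ) := by exact_mod_cast hFcard
    linarith
  set mu := ρ (M.simple t) lam with hmu
  have hmuroot : IsRoot M ρ mu := S19.isRoot_map M ρ hlroot _
  have hmueq : mu = lam - (2 * form M lam (sroot t)) • sroot t := by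
    rw [hmu, hρ]
  have hmupos : IsPos mu := by
    intro x
    rw [hmueq]
    simp only [Pi.sub_apply, Pi.smul_apply, smul_eq_mul]
    rcases eq_or_ne x t with hx | hx
    · subst hx
      rw [S19.sroot_apply_same, h1]
      nlinarith
    · rw [S19.sroot_apply_ne hx]
      have := hlpos x
      nlinarith
  refine ⟨⟨hmuroot, hmupos⟩, ?_⟩
  intro hmin
  -- `mu` pairs at least 1 with `α_t`
  have hmut : (1:ℝ) ≤ form M mu (sroot t) := by
    rw [hmueq, S19.form_sub_left, S19.form_smul_left, S19.form_sroot_self]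
    linarith
  have hat_posroot : IsPosRoot M ρ (sroot t) :=
    ⟨S19.isRoot_sroot M ρ t, fun x => (S19.nice_sroot t x).1⟩
  have hne : sroot t ≠ mu := by
    intro h
    have h' : mu t = 1 := by rw [← h, S19.sroot_apply_same]
    rw [hmueq] at h'
    simp only [Pi.sub_apply, Pi.smul_apply, smul_eq_mul] at h'
    rw [S19.sroot_apply_same, h1] at h'
    nlinarith
  have hnotdom : ¬ Dominates M ρ mu (sroot t) := by
    intro hdom
    exact hne (hmin.2 (sroot t) hat_posroot hdom)
  rw [Dominates] at hnotdom
  push_neg at hnotdom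
  obtain ⟨w₁, hw1pos, hw1neg'⟩ := hnotdom
  have hw1neg : IsNeg (ρ w₁ mu) :=
    S19.isNeg_of_not_pos M ρ hρ (S19.isRoot_map M ρ hmuroot w₁) hw1neg'
  have h2g : IsPos (ρ (M.simple t) mu) := by
    rw [hmu, S19.sigma_sigma M ρ hρ t lam]
    exact hlpos
  have h2b : IsNeg (ρ (M.simple t) (sroot t)) := by
    rw [S19.sigma_sroot_self M ρ hρ t]
    intro x
    simp only [Pi.neg_apply, neg_nonpos]
    exact (S19.nice_sroot t x).1
  exact S19.no_double_witness M ρ hρ ⟨hmuroot, hmupos⟩ hat_posroot hmut w₁ (M.simple t)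
    hw1pos hw1neg h2g h2b
end
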